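/- Let A be a p-torsion-free commutative ring equipped with a ring endomorphism φ with φ(x) ≡ x^p mod p, giving A the structure of a δ-ring with δ(x) = (φ(x) − x^p)/p. If A is moreover a perfect δ-ring in the sense that φ is an automorphism, and (A, I) is a transversal perfect prism with A/I =: S, then for each r ≥ 1 the ring A/I_r is p-torsion-free and the reduction maps A/I_{r+1} → A/I_r are surjective with kernel I_r/I_{r+1} on which multiplication by p is injective. -/

import Mathlib

/-- The `n`-fold composite of a ring endomorphism. -/
def iterHom {A : Type*} [CommRing A] (φ : A →+* A) : ℕ → (A →+* A)
  | 0 => RingHom.id A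
  | n + 1 => φ.comp (iterHom φ n)

/-- `prIdeal φ I r = I · φ(I) ⋯ φ^(r-1)(I)` (the ideal `I_r`), with `prIdeal φ I 0 = (1)`. -/
def prIdeal {A : Type*} [CommRing A] (φ : A →+* A) (I : Ideal A) : ℕ → Ideal A
  | 0 => ⊤
  | n + 1 => prIdeal φ I n * I.map (iterHom φ n)

/-- Generator of `prIdeal`. -/
def prGen {A : Type*} [CommRing A] (φ : A →+* A) (d : A) : ℕ → A
  | 0 => 1
  | n + 1 => prGen φ d n * iterHom φ n d

lemma iterHom_bij {A : Type*} [CommRing A] {φ : A →+* A} (hperf : Function.Bijective φ)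
    (n : ℕ) : Function.Bijective (iterHom φ n) := by
  induction n with
  | zero => exact Function.bijective_id
  | succ n ih => exact hperf.comp ih

lemma nzd_map {A : Type*} [CommRing A] {f : A →+* A} (hf : Function.Bijective f)
    {d : A} (hd : d ∈ nonZeroDivisors A) : f d ∈ nonZeroDivisors A := by
  rw [mem_nonZeroDivisors_iff_right] at hd ⊢
  intro x hx
  obtain ⟨y, rfl⟩ := hf.2 x
  have h0 : y * d = 0 := hf.1 (by rw [map_mul, map_zero]; exact hx)
  rw [hd y h0]; exact map_zero f

lemma prGen_nzd {A : Type*} [CommRing A] {φ : A →+* A} (hperf : Function.Bijective φ)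
    {d : A} (hd : d ∈ nonZeroDivisors A) (n : ℕ) : prGen φ d n ∈ nonZeroDivisors A := by
  induction n with
  | zero => exact one_mem _
  | succ n ih => exact mul_mem ih (nzd_map (iterHom_bij hperf n) hd)

lemma prIdeal_span {A : Type*} [CommRing A] (φ : A →+* A) (d : A) (n : ℕ) :
    prIdeal φ (Ideal.span {d}) n = Ideal.span {prGen φ d n} := by
  induction n with
  | zero => simp [prIdeal, prGen]
  | succ n ih =>
      rw [prIdeal, ih, prGen, Ideal.map_span, Set.image_singleton,
        Ideal.span_singleton_mul_span_singleton]

section main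

variable {A : Type*} [CommRing A] (p : ℕ) (δ : A → A) (φ : A →+* A) (d : A)

/-- key lemma: `A / φⁿ(I)` is `p`-torsion free. -/
lemma key (htrans : ∀ x : A ⧸ Ideal.span {d}, (p : A ⧸ Ideal.span {d}) * x = 0 → x = 0)
    (hperf : Function.Bijective φ) (n : ℕ) (x : A)
    (hx : (p : A) * x ∈ Ideal.span {iterHom φ n d}) :
    x ∈ Ideal.span {iterHom φ n d} := by
  obtain ⟨y, hy⟩ := Ideal.mem_span_singleton'.mp hx
  obtain ⟨x', rfl⟩ := (iterHom_bij hperf n).2 x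
  obtain ⟨y', rfl⟩ := (iterHom_bij hperf n).2 y
  have h2 : y' * d = (p : A) * x' := by
    apply (iterHom_bij hperf n).1
    simpa using hy
  have h3 : x' ∈ Ideal.span {d} := by
    rw [← Ideal.Quotient.eq_zero_iff_mem]
    apply htrans
    rw [← map_natCast (Ideal.Quotient.mk (Ideal.span {d})), ← map_mul, ← h2,
      Ideal.Quotient.eq_zero_iff_mem]
    exact Ideal.mem_span_singleton'.mpr ⟨y', rfl⟩
  obtain ⟨c, hc⟩ := Ideal.mem_span_singleton'.mp h3
  exact Ideal.mem_span_singleton'.mpr ⟨iterHom φ n c, by rw [← map_mul, hc]⟩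

lemma step (htrans : ∀ x : A ⧸ Ideal.span {d}, (p : A ⧸ Ideal.span {d}) * x = 0 → x = 0)
    (hdnz : d ∈ nonZeroDivisors A) (hperf : Function.Bijective φ) (n : ℕ) (x : A)
    (hx : x ∈ Ideal.span {prGen φ d n})
    (hpx : (p : A) * x ∈ Ideal.span {prGen φ d (n + 1)}) :
    x ∈ Ideal.span {prGen φ d (n + 1)} := by
  obtain ⟨a, rfl⟩ := Ideal.mem_span_singleton'.mp hx
  obtain ⟨y, hy⟩ := Ideal.mem_span_singleton'.mp hpx
  have hcancel : (p : A) * a = y * iterHom φ n d := by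
    rw [show prGen φ d (n+1) = prGen φ d n * iterHom φ n d from rfl] at hy
    exact (mul_cancel_right_mem_nonZeroDivisors (prGen_nzd hperf hdnz n)).mp
      (by linear_combination -hy)
  have ha := key p φ d htrans hperf n a (Ideal.mem_span_singleton'.mpr ⟨y, hcancel.symm⟩)
  obtain ⟨c, hc⟩ := Ideal.mem_span_singleton'.mp ha
  refine Ideal.mem_span_singleton'.mpr ⟨c, ?_⟩
  rw [show prGen φ d (n+1) = prGen φ d n * iterHom φ n d from rfl, ← hc]
  ring

lemma tf (htrans : ∀ x : A ⧸ Ideal.span {d}, (p : A ⧸ Ideal.span {d}) * x = 0 → x = 0)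
    (hdnz : d ∈ nonZeroDivisors A) (hperf : Function.Bijective φ) (n : ℕ) (x : A)
    (hpx : (p : A) * x ∈ Ideal.span {prGen φ d (n + 1)}) :
    x ∈ Ideal.span {prGen φ d (n + 1)} := by
  induction n generalizing x with
  | zero =>
      have h1 : prGen φ d 1 = d := by simp [prGen, iterHom]
      rw [h1] at hpx ⊢
      have := key p φ d htrans hperf 0 x (by simpa [iterHom] using hpx)
      simpa [iterHom] using this
  | succ n ih =>
      have hx : x ∈ Ideal.span {prGen φ d (n + 1)} := by
        apply ih
        refine Ideal.span_singleton_le_span_singleton.mpr ?_ hpx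
        exact ⟨iterHom φ (n+1) d, rfl⟩
      exact step p φ d htrans hdnz hperf (n+1) x hx hpx

end main

theorem statement17
    (p : ℕ) (hp : p.Prime) {A : Type*} [CommRing A]
    (δ : A → A) (φ : A →+* A) (I : Ideal A) (d : A)
    (hdgen : I = Ideal.span {d}) (hdnz : d ∈ nonZeroDivisors A)
    (hφ : ∀ x : A, φ x = x ^ p + (p : A) * δ x)
    (hδ1 : δ 1 = 0)
    (hδadd : ∀ x y : A, δ (x + y) =
      δ x + δ y - ∑ i ∈ Finset.Ioo 0 p, ((p.choose i / p : ℕ) : A) * x ^ i * y ^ (p - i))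
    (hδmul : ∀ x y : A, δ (x * y) =
      x ^ p * δ y + y ^ p * δ x + (p : A) * δ x * δ y)
    (hcomplete : IsAdicComplete (Ideal.span {(p : A)} ⊔ I) A)
    (hdist : (p : A) ∈ I ⊔ I.map φ)
    (htrans : ∀ x : A ⧸ I, (p : A ⧸ I) * x = 0 → x = 0)
    (hAtf : ∀ x : A, (p : A) * x = 0 → x = 0)
    (hperf : Function.Bijective φ)
    (r : ℕ) (hr : 1 ≤ r) :
    (∀ y : A ⧸ prIdeal φ I r, (p : A ⧸ prIdeal φ I r) * y = 0 → y = 0) ∧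
    Function.Surjective
      (Ideal.Quotient.factor (S := prIdeal φ I (r + 1)) (T := prIdeal φ I r) Ideal.mul_le_left) ∧
    RingHom.ker
        (Ideal.Quotient.factor (S := prIdeal φ I (r + 1)) (T := prIdeal φ I r) Ideal.mul_le_left) =
      (prIdeal φ I r).map (Ideal.Quotient.mk (prIdeal φ I (r + 1))) ∧
    (∀ x ∈ prIdeal φ I r, (p : A) * x ∈ prIdeal φ I (r + 1) → x ∈ prIdeal φ I (r + 1)) := by
  subst hdgen
  obtain ⟨n, rfl⟩ := Nat.exists_eq_add_of_le hr
  set r := 1 + n with hrdef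
  have hspan : ∀ m, prIdeal φ (Ideal.span {d}) m = Ideal.span {prGen φ d m} :=
    prIdeal_span φ d
  refine ⟨?_, ?_, ?_, ?_⟩
  · -- p-torsion-freeness of A / I_r
    intro y hy
    obtain ⟨x, rfl⟩ := Ideal.Quotient.mk_surjective y
    rw [← map_natCast (Ideal.Quotient.mk (prIdeal φ (Ideal.span {d}) r)), ← map_mul,
      Ideal.Quotient.eq_zero_iff_mem] at hy
    rw [Ideal.Quotient.eq_zero_iff_mem]
    rw [hspan] at hy ⊢
    have hr' : r = n + 1 := by omega
    rw [hr'] at hy ⊢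
    exact tf p φ d htrans hdnz hperf n x hy
  · -- surjectivity
    intro y
    obtain ⟨x, rfl⟩ := Ideal.Quotient.mk_surjective y
    exact ⟨Ideal.Quotient.mk _ x, Ideal.Quotient.factor_mk _ x⟩
  · -- kernel
    ext y
    obtain ⟨x, rfl⟩ := Ideal.Quotient.mk_surjective y
    rw [RingHom.mem_ker]
    show Ideal.Quotient.mk (prIdeal φ (Ideal.span {d}) r) x = 0 ↔ _
    rw [Ideal.Quotient.eq_zero_iff_mem]
    constructor
    · intro hx
      exact Ideal.mem_map_of_mem _ hx
    · intro hx
      obtain ⟨z, hz, hzx⟩ := Ideal.mem_image_of_mem_map_of_surjective _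
        Ideal.Quotient.mk_surjective hx
      have : x - z ∈ prIdeal φ (Ideal.span {d}) (r + 1) := by
        rw [← Ideal.Quotient.eq_zero_iff_mem, map_sub, hzx, sub_self]
      have h2 : x - z ∈ prIdeal φ (Ideal.span {d}) r := Ideal.mul_le_left this
      simpa using add_mem h2 hz
  · -- p-injectivity on I_r / I_{r+1}
    intro x hx hpx
    rw [hspan] at hx hpx ⊢
    exact step p φ d htrans hdnz hperf r x hx hpx
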